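/- Let G be a graph with m edges, let m̃ ≥ e^{-1/10}·m with m̃ > 0, set p = 1/(10√m̃), and let u be a vertex with deg(u) ≤ 2√m̃ and v a vertex with deg(v) ≤ 2√m̃. Draw a random vertex subset S by including each vertex independently with probability p. Then the probability that S contains a neighbor of u other than v, or a neighbor of v other than u, or an edge adjacent to neither u nor v, is at most 1/2. Consequently the 'loneliness' probability that the pair {u,v} is lonely in S is at least 1/2. -/

import Mathlib

open scoped Classical


lemma key_sum {V : Type*} [Fintype V] [DecidableEq V] (p : ℝ) (T : Finset V) :
    ∑ g : V → Bool, (if ∀ x ∈ T, g x = true then ∏ w : V, (if g w then p else 1 - p) else 0)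
      = p ^ T.card := by
  have h1 : ∀ g : V → Bool,
      (if ∀ x ∈ T, g x = true then ∏ w : V, (if g w then p else 1 - p) else 0)
      = ∏ w : V, (if w ∈ T then (if g w then p else 0) else (if g w then p else 1 - p)) := by
    intro g
    by_cases h : ∀ x ∈ T, g x = true
    · rw [if_pos h]
      refine Finset.prod_congr rfl fun w _ => ?_
      by_cases hw : w ∈ T
      · simp [hw, h w hw]
      · simp [hw]
    · rw [if_neg h, eq_comm]
      push_neg at h
      obtain ⟨x, hx, hgx⟩ := h
      apply Finset.prod_eq_zero (Finset.mem_univ x)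
      simp [hx, hgx]
  rw [Finset.sum_congr rfl fun g _ => h1 g]
  rw [← Fintype.piFinset_univ, ← Finset.prod_univ_sum
    (f := fun (w : V) (b : Bool) => if w ∈ T then (if b then p else 0) else (if b then p else 1 - p))
    (t := fun _ => (Finset.univ : Finset Bool))]
  have h2 : ∀ w : V, (∑ b : Bool, if w ∈ T then (if b then p else 0) else (if b then p else 1 - p))
      = if w ∈ T then p else 1 := by
    intro w; by_cases hw : w ∈ T <;> simp [hw]
  rw [Finset.prod_congr rfl fun w _ => h2 w, Finset.prod_ite_mem, Finset.univ_inter,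
    Finset.prod_const]

lemma key_total {V : Type*} [Fintype V] [DecidableEq V] (p : ℝ) :
    ∑ g : V → Bool, (∏ w : V, (if g w then p else 1 - p)) = 1 := by
  have := key_sum (V := V) p ∅
  simpa using this

lemma key_one {V : Type*} [Fintype V] [DecidableEq V] (p : ℝ) (x : V) :
    ∑ g : V → Bool, (if g x = true then ∏ w : V, (if g w then p else 1 - p) else 0) = p := by
  have h := key_sum p ({x} : Finset V)
  have e : (∑ g : V → Bool, (if g x = true then ∏ w : V, (if g w then p else 1 - p) else 0))
      = ∑ g : V → Bool, (if ∀ z ∈ ({x} : Finset V), g z = true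
          then ∏ w : V, (if g w then p else 1 - p) else 0) :=
    Finset.sum_congr rfl fun g _ => by simp
  rw [e, h, Finset.card_singleton, pow_one]

lemma key_two {V : Type*} [Fintype V] [DecidableEq V] (p : ℝ) {x y : V} (hxy : x ≠ y) :
    ∑ g : V → Bool, (if g x = true ∧ g y = true then ∏ w : V, (if g w then p else 1 - p) else 0)
      = p ^ 2 := by
  have h := key_sum p ({x, y} : Finset V)
  have e : (∑ g : V → Bool,
        (if g x = true ∧ g y = true then ∏ w : V, (if g w then p else 1 - p) else 0))
      = ∑ g : V → Bool, (if ∀ z ∈ ({x, y} : Finset V), g z = true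
          then ∏ w : V, (if g w then p else 1 - p) else 0) := by
    refine Finset.sum_congr rfl fun g _ => ?_
    congr 1
    simp only [Finset.mem_insert, Finset.mem_singleton, eq_iff_iff]
    constructor
    · rintro ⟨h1, h2⟩ z (rfl | rfl) <;> assumption
    · intro h; exact ⟨h x (Or.inl rfl), h y (Or.inr rfl)⟩
  rw [e, h, Finset.card_insert_of_notMem (by simpa using hxy), Finset.card_singleton]

/-- Drawing each vertex independently with probability `p = 1/(10√m̃)`, the probability
of a "bad" event (a neighbor of `u` other than `v` in `S`, a neighbor of `v` other than
`u` in `S`, or an edge of `S` avoiding both `u` and `v`) is at most `1/2`; consequently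
the pair `{u,v}` is lonely in `S` with probability at least `1/2`. -/
theorem loneliness_lower_bound {V : Type*} [Fintype V] [DecidableEq V]
    (G : SimpleGraph V) [DecidableRel G.Adj] (mt p : ℝ)
    (hmt0 : 0 < mt) (hmt : Real.exp (-(1/10)) * (G.edgeFinset.card : ℝ) ≤ mt)
    (hp : p = 1 / (10 * Real.sqrt mt)) (u v : V)
    (hu : (G.degree u : ℝ) ≤ 2 * Real.sqrt mt)
    (hv : (G.degree v : ℝ) ≤ 2 * Real.sqrt mt) :
    (∑ g : V → Bool,
        if ((∃ w, G.Adj u w ∧ w ≠ v ∧ g w = true) ∨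
            (∃ w, G.Adj v w ∧ w ≠ u ∧ g w = true) ∨
            (∃ a b, G.Adj a b ∧ g a = true ∧ g b = true ∧
              a ≠ u ∧ a ≠ v ∧ b ≠ u ∧ b ≠ v))
          then ∏ w : V, (if g w then p else 1 - p) else 0) ≤ 1 / 2 ∧
    1 / 2 ≤ (∑ g : V → Bool,
        if (∀ a b, G.Adj a b → (g a = true ∨ a = u ∨ a = v) →
            (g b = true ∨ b = u ∨ b = v) → (a = u ∧ b = v) ∨ (a = v ∧ b = u))
          then ∏ w : V, (if g w then p else 1 - p) else 0) := by
  set μ : (V → Bool) → ℝ := fun g => ∏ w : V, (if g w then p else 1 - p) with hμ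
  by_cases hm : G.edgeFinset.card = 0
  · -- no edges
    have hadj : ∀ a b : V, ¬ G.Adj a b := by
      intro a b hab
      have h : s(a, b) ∈ G.edgeFinset := by
        rw [SimpleGraph.mem_edgeFinset]; exact hab
      rw [Finset.card_eq_zero] at hm
      simp [hm] at h
    constructor
    · have h0 : (∑ g : V → Bool,
          if ((∃ w, G.Adj u w ∧ w ≠ v ∧ g w = true) ∨
              (∃ w, G.Adj v w ∧ w ≠ u ∧ g w = true) ∨
              (∃ a b, G.Adj a b ∧ g a = true ∧ g b = true ∧
                a ≠ u ∧ a ≠ v ∧ b ≠ u ∧ b ≠ v))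
            then μ g else 0) = 0 := by
        refine Finset.sum_eq_zero fun g _ => ?_
        rw [if_neg]
        rintro (⟨w, hw, -⟩ | ⟨w, hw, -⟩ | ⟨a, b, hab, -⟩)
        · exact hadj u w hw
        · exact hadj v w hw
        · exact hadj a b hab
      rw [h0]; norm_num
    · have h1 : (∑ g : V → Bool,
          if (∀ a b, G.Adj a b → (g a = true ∨ a = u ∨ a = v) →
              (g b = true ∨ b = u ∨ b = v) → (a = u ∧ b = v) ∨ (a = v ∧ b = u))
            then μ g else 0) = 1 := by
        rw [Finset.sum_congr rfl fun g _ => if_pos (fun a b hab (_ : g a = true ∨ a = u ∨ a = v) (_ : g b = true ∨ b = u ∨ b = v) => absurd hab (hadj a b))]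
        exact key_total p
      rw [h1]; norm_num
  · -- at least one edge
    have hm1 : (1 : ℝ) ≤ (G.edgeFinset.card : ℝ) := by
      exact_mod_cast Nat.one_le_iff_ne_zero.mpr hm
    have hexp : (9 : ℝ) / 10 ≤ Real.exp (-(1/10)) := by
      have := Real.add_one_le_exp (-(1/10 : ℝ)); linarith
    have hmt9 : (9 : ℝ) / 10 ≤ mt := by nlinarith [Real.exp_pos (-(1/10 : ℝ))]
    have hsq : (0 : ℝ) < Real.sqrt mt := Real.sqrt_pos.mpr hmt0
    have hsq1 : (1 : ℝ) / 10 ≤ Real.sqrt mt := by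
      rw [show (1:ℝ)/10 = Real.sqrt (1/100) by
        rw [show (1:ℝ)/100 = (1/10)^2 by norm_num, Real.sqrt_sq (by norm_num)]]
      exact Real.sqrt_le_sqrt (by linarith)
    have hp0 : 0 < p := by rw [hp]; positivity
    have hp1 : p ≤ 1 := by
      rw [hp, div_le_one (by positivity)]; linarith
    have hμ0 : ∀ g : V → Bool, 0 ≤ μ g := by
      intro g
      refine Finset.prod_nonneg fun w _ => ?_
      by_cases h : g w <;> simp [h] <;> linarith
    have hM : (G.edgeFinset.card : ℝ) ≤ Real.exp (1/10) * mt := by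
      have h1 : Real.exp (1/10) * (Real.exp (-(1/10)) * (G.edgeFinset.card : ℝ))
          ≤ Real.exp (1/10) * mt :=
        mul_le_mul_of_nonneg_left hmt (Real.exp_nonneg _)
      rwa [← mul_assoc, ← Real.exp_add, show (1:ℝ)/10 + -(1/10) = 0 by ring, Real.exp_zero,
        one_mul] at h1
    have hpsq : p ^ 2 = 1 / (100 * mt) := by
      rw [hp, div_pow, one_pow, mul_pow, Real.sq_sqrt hmt0.le]; norm_num
    set X : (V → Bool) → ℝ := fun g =>
      (∑ w ∈ (G.neighborFinset u).erase v, (if g w = true then (1:ℝ) else 0)) +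
      (∑ w ∈ (G.neighborFinset v).erase u, (if g w = true then (1:ℝ) else 0)) +
      (∑ a : V, ∑ b ∈ G.neighborFinset a,
        (if g a = true ∧ g b = true ∧ a ≠ u ∧ a ≠ v ∧ b ≠ u ∧ b ≠ v then (1:ℝ) else 0)) with hX
    have hXnn : ∀ g, 0 ≤ X g := by
      intro g
      refine add_nonneg (add_nonneg ?_ ?_) ?_
      · exact Finset.sum_nonneg fun _ _ => by positivity
      · exact Finset.sum_nonneg fun _ _ => by positivity
      · exact Finset.sum_nonneg fun _ _ => Finset.sum_nonneg fun _ _ => by positivity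
    have hbad : (∑ g : V → Bool,
        if ((∃ w, G.Adj u w ∧ w ≠ v ∧ g w = true) ∨
            (∃ w, G.Adj v w ∧ w ≠ u ∧ g w = true) ∨
            (∃ a b, G.Adj a b ∧ g a = true ∧ g b = true ∧
              a ≠ u ∧ a ≠ v ∧ b ≠ u ∧ b ≠ v))
          then μ g else 0) ≤ ∑ g : V → Bool, X g * μ g := by
      refine Finset.sum_le_sum fun g _ => ?_
      by_cases hb : ((∃ w, G.Adj u w ∧ w ≠ v ∧ g w = true) ∨
            (∃ w, G.Adj v w ∧ w ≠ u ∧ g w = true) ∨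
            (∃ a b, G.Adj a b ∧ g a = true ∧ g b = true ∧
              a ≠ u ∧ a ≠ v ∧ b ≠ u ∧ b ≠ v))
      · rw [if_pos hb]
        have h1' : 0 ≤ ∑ w ∈ (G.neighborFinset u).erase v, (if g w = true then (1:ℝ) else 0) :=
          Finset.sum_nonneg fun _ _ => by positivity
        have h2' : 0 ≤ ∑ w ∈ (G.neighborFinset v).erase u, (if g w = true then (1:ℝ) else 0) :=
          Finset.sum_nonneg fun _ _ => by positivity
        have h3' : 0 ≤ ∑ a : V, ∑ b ∈ G.neighborFinset a,
            (if g a = true ∧ g b = true ∧ a ≠ u ∧ a ≠ v ∧ b ≠ u ∧ b ≠ v then (1:ℝ) else 0) :=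
          Finset.sum_nonneg fun _ _ => Finset.sum_nonneg fun _ _ => by positivity
        have h1 : 1 ≤ X g := by
          rcases hb with ⟨w, hw, hwv, hgw⟩ | ⟨w, hw, hwu, hgw⟩ | ⟨a, b, hab, hga, hgb, h4⟩
          · have hone : (1:ℝ) ≤ ∑ w ∈ (G.neighborFinset u).erase v,
                (if g w = true then (1:ℝ) else 0) := by
              have hmem : w ∈ (G.neighborFinset u).erase v := by
                simp [Finset.mem_erase, SimpleGraph.mem_neighborFinset, hwv, hw]
              have h5 := Finset.single_le_sum (f := fun w => if g w = true then (1:ℝ) else 0)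
                (fun _ _ => by positivity) hmem
              simpa [hgw] using h5
            rw [hX]; dsimp only; linarith
          · have hone : (1:ℝ) ≤ ∑ w ∈ (G.neighborFinset v).erase u,
                (if g w = true then (1:ℝ) else 0) := by
              have hmem : w ∈ (G.neighborFinset v).erase u := by
                simp [Finset.mem_erase, SimpleGraph.mem_neighborFinset, hwu, hw]
              have h5 := Finset.single_le_sum (f := fun w => if g w = true then (1:ℝ) else 0)
                (fun _ _ => by positivity) hmem
              simpa [hgw] using h5
            rw [hX]; dsimp only; linarith
          · have hin : (1:ℝ) ≤ ∑ b' ∈ G.neighborFinset a,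
                (if g a = true ∧ g b' = true ∧ a ≠ u ∧ a ≠ v ∧ b' ≠ u ∧ b' ≠ v
                  then (1:ℝ) else 0) := by
              have hmem : b ∈ G.neighborFinset a := by
                simpa [SimpleGraph.mem_neighborFinset] using hab
              have h5 := Finset.single_le_sum
                (f := fun b' => if g a = true ∧ g b' = true ∧ a ≠ u ∧ a ≠ v ∧ b' ≠ u ∧ b' ≠ v
                  then (1:ℝ) else 0)
                (fun _ _ => by positivity) hmem
              simpa [hga, hgb, h4.1, h4.2.1, h4.2.2.1, h4.2.2.2] using h5
            have h3 : (1:ℝ) ≤ ∑ a' : V, ∑ b' ∈ G.neighborFinset a',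
                (if g a' = true ∧ g b' = true ∧ a' ≠ u ∧ a' ≠ v ∧ b' ≠ u ∧ b' ≠ v
                  then (1:ℝ) else 0) :=
              hin.trans (Finset.single_le_sum
                (f := fun a' => ∑ b' ∈ G.neighborFinset a',
                  (if g a' = true ∧ g b' = true ∧ a' ≠ u ∧ a' ≠ v ∧ b' ≠ u ∧ b' ≠ v
                    then (1:ℝ) else 0))
                (fun _ _ => Finset.sum_nonneg fun _ _ => by positivity) (Finset.mem_univ a))
            rw [hX]; dsimp only; linarith
        calc μ g = 1 * μ g := (one_mul _).symm
        _ ≤ X g * μ g := mul_le_mul_of_nonneg_right h1 (hμ0 g)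
      · rw [if_neg hb]
        exact mul_nonneg (hXnn g) (hμ0 g)
    have hEX : ∑ g : V → Bool, X g * μ g ≤
        (((G.neighborFinset u).erase v).card : ℝ) * p
        + (((G.neighborFinset v).erase u).card : ℝ) * p
        + (2 * (G.edgeFinset.card : ℝ)) * p ^ 2 := by
      have expand : ∀ g : V → Bool, X g * μ g =
          (∑ w ∈ (G.neighborFinset u).erase v, (if g w = true then μ g else 0)) +
          (∑ w ∈ (G.neighborFinset v).erase u, (if g w = true then μ g else 0)) +
          (∑ a : V, ∑ b ∈ G.neighborFinset a,
            (if g a = true ∧ g b = true ∧ a ≠ u ∧ a ≠ v ∧ b ≠ u ∧ b ≠ v then μ g else 0)) := by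
        intro g
        rw [hX]; dsimp only
        rw [add_mul, add_mul, Finset.sum_mul, Finset.sum_mul, Finset.sum_mul]
        congr 1
        · congr 1 <;> exact Finset.sum_congr rfl fun w _ => by rw [ite_mul, one_mul, zero_mul]
        · refine Finset.sum_congr rfl fun a _ => ?_
          rw [Finset.sum_mul]
          exact Finset.sum_congr rfl fun b _ => by rw [ite_mul, one_mul, zero_mul]
      rw [Finset.sum_congr rfl fun g _ => expand g]
      rw [Finset.sum_add_distrib, Finset.sum_add_distrib]
      have e1 : (∑ g : V → Bool, ∑ w ∈ (G.neighborFinset u).erase v,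
          (if g w = true then μ g else 0)) = (((G.neighborFinset u).erase v).card : ℝ) * p := by
        rw [Finset.sum_comm]
        rw [Finset.sum_congr rfl fun w _ => key_one p w]
        rw [Finset.sum_const, nsmul_eq_mul]
      have e2 : (∑ g : V → Bool, ∑ w ∈ (G.neighborFinset v).erase u,
          (if g w = true then μ g else 0)) = (((G.neighborFinset v).erase u).card : ℝ) * p := by
        rw [Finset.sum_comm]
        rw [Finset.sum_congr rfl fun w _ => key_one p w]
        rw [Finset.sum_const, nsmul_eq_mul]
      have e3 : (∑ g : V → Bool, ∑ a : V, ∑ b ∈ G.neighborFinset a,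
          (if g a = true ∧ g b = true ∧ a ≠ u ∧ a ≠ v ∧ b ≠ u ∧ b ≠ v then μ g else 0))
          ≤ (2 * (G.edgeFinset.card : ℝ)) * p ^ 2 := by
        rw [Finset.sum_comm]
        have inner : ∀ a : V, (∑ g : V → Bool, ∑ b ∈ G.neighborFinset a,
            (if g a = true ∧ g b = true ∧ a ≠ u ∧ a ≠ v ∧ b ≠ u ∧ b ≠ v then μ g else 0))
            ≤ (G.degree a : ℝ) * p ^ 2 := by
          intro a
          rw [Finset.sum_comm]
          have hb : ∀ b ∈ G.neighborFinset a, (∑ g : V → Bool,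
              (if g a = true ∧ g b = true ∧ a ≠ u ∧ a ≠ v ∧ b ≠ u ∧ b ≠ v then μ g else 0))
              ≤ p ^ 2 := by
            intro b hbm
            have hab : G.Adj a b := (SimpleGraph.mem_neighborFinset G a b).mp hbm
            rw [← key_two p (G.ne_of_adj hab)]
            refine Finset.sum_le_sum fun g _ => ?_
            by_cases h : (g a = true ∧ g b = true ∧ a ≠ u ∧ a ≠ v ∧ b ≠ u ∧ b ≠ v)
            · rw [if_pos h, if_pos ⟨h.1, h.2.1⟩]
            · rw [if_neg h]
              split_ifs with h'
              · exact hμ0 g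
              · exact le_rfl
          calc (∑ b ∈ G.neighborFinset a, ∑ g : V → Bool,
              (if g a = true ∧ g b = true ∧ a ≠ u ∧ a ≠ v ∧ b ≠ u ∧ b ≠ v then μ g else 0))
              ≤ ∑ b ∈ G.neighborFinset a, p ^ 2 := Finset.sum_le_sum hb
          _ = (G.degree a : ℝ) * p ^ 2 := by
              rw [Finset.sum_const, nsmul_eq_mul, SimpleGraph.card_neighborFinset_eq_degree]
        calc (∑ a : V, ∑ g : V → Bool, ∑ b ∈ G.neighborFinset a,
            (if g a = true ∧ g b = true ∧ a ≠ u ∧ a ≠ v ∧ b ≠ u ∧ b ≠ v then μ g else 0))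
            ≤ ∑ a : V, (G.degree a : ℝ) * p ^ 2 := Finset.sum_le_sum fun a _ => inner a
        _ = (2 * (G.edgeFinset.card : ℝ)) * p ^ 2 := by
            rw [← Finset.sum_mul]
            congr 1
            rw [← Nat.cast_sum]
            rw [SimpleGraph.sum_degrees_eq_twice_card_edges]
            push_cast; ring
      linarith
    have hcard_u : (((G.neighborFinset u).erase v).card : ℝ) ≤ (G.degree u : ℝ) := by
      have := Finset.card_erase_le (s := G.neighborFinset u) (a := v)
      rw [SimpleGraph.card_neighborFinset_eq_degree] at this
      exact_mod_cast this
    have hcard_v : (((G.neighborFinset v).erase u).card : ℝ) ≤ (G.degree v : ℝ) := by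
      have := Finset.card_erase_le (s := G.neighborFinset v) (a := u)
      rw [SimpleGraph.card_neighborFinset_eq_degree] at this
      exact_mod_cast this
    have hfifth : 2 * Real.sqrt mt * p = 1 / 5 := by
      rw [hp]; field_simp; ring
    have hequarter : (2 * (G.edgeFinset.card : ℝ)) * p ^ 2 ≤ Real.exp (1/10) / 50 := by
      rw [hpsq]
      rw [mul_one_div, div_le_div_iff₀ (by positivity) (by norm_num)]
      nlinarith
    have hexplt : Real.exp (1/10) < 2.7182818286 := by
      calc Real.exp (1/10) ≤ Real.exp 1 := Real.exp_le_exp.mpr (by norm_num)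
      _ < 2.7182818286 := Real.exp_one_lt_d9
    have hbad_half : (∑ g : V → Bool,
        if ((∃ w, G.Adj u w ∧ w ≠ v ∧ g w = true) ∨
            (∃ w, G.Adj v w ∧ w ≠ u ∧ g w = true) ∨
            (∃ a b, G.Adj a b ∧ g a = true ∧ g b = true ∧
              a ≠ u ∧ a ≠ v ∧ b ≠ u ∧ b ≠ v))
          then μ g else 0) ≤ 1 / 2 := by
      have hcu : (((G.neighborFinset u).erase v).card : ℝ) * p ≤ 1 / 5 := by
        calc (((G.neighborFinset u).erase v).card : ℝ) * p ≤ (2 * Real.sqrt mt) * p :=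
          mul_le_mul_of_nonneg_right (hcard_u.trans hu) hp0.le
        _ = 1 / 5 := hfifth
      have hcv : (((G.neighborFinset v).erase u).card : ℝ) * p ≤ 1 / 5 := by
        calc (((G.neighborFinset v).erase u).card : ℝ) * p ≤ (2 * Real.sqrt mt) * p :=
          mul_le_mul_of_nonneg_right (hcard_v.trans hv) hp0.le
        _ = 1 / 5 := hfifth
      calc _ ≤ ∑ g : V → Bool, X g * μ g := hbad
      _ ≤ _ := hEX
      _ ≤ 1/5 + 1/5 + Real.exp (1/10) / 50 := by linarith
      _ ≤ 1/2 := by linarith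
    refine ⟨hbad_half, ?_⟩
    have hlogic : ∀ g : V → Bool,
        ¬(∀ a b, G.Adj a b → (g a = true ∨ a = u ∨ a = v) →
            (g b = true ∨ b = u ∨ b = v) → (a = u ∧ b = v) ∨ (a = v ∧ b = u)) →
        ((∃ w, G.Adj u w ∧ w ≠ v ∧ g w = true) ∨
            (∃ w, G.Adj v w ∧ w ≠ u ∧ g w = true) ∨
            (∃ a b, G.Adj a b ∧ g a = true ∧ g b = true ∧
              a ≠ u ∧ a ≠ v ∧ b ≠ u ∧ b ≠ v)) := by
      intro g hl
      push_neg at hl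
      obtain ⟨a, b, hab, ha, hb, hn⟩ := hl
      by_cases hau : a = u
      · subst hau
        rcases hb with hgb | hbu | hbv
        · by_cases hbv : b = v
          · exact absurd hbv (hn.1 rfl)
          · exact Or.inl ⟨b, hab, hbv, hgb⟩
        · exact absurd hbu (G.ne_of_adj hab).symm
        · exact absurd hbv (hn.1 rfl)
      by_cases hav : a = v
      · subst hav
        rcases hb with hgb | hbu | hbv
        · by_cases hbu : b = u
          · exact absurd hbu (hn.2 rfl)
          · exact Or.inr (Or.inl ⟨b, hab, hbu, hgb⟩)
        · exact absurd hbu (hn.2 rfl)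
        · exact absurd hbv (G.ne_of_adj hab).symm
      rcases ha with hga | h | h
      · rcases hb with hgb | hbu | hbv
        · by_cases hbu : b = u
          · subst hbu; exact Or.inl ⟨a, hab.symm, hav, hga⟩
          · by_cases hbv : b = v
            · subst hbv; exact Or.inr (Or.inl ⟨a, hab.symm, hau, hga⟩)
            · exact Or.inr (Or.inr ⟨a, b, hab, hga, hgb, hau, hav, hbu, hbv⟩)
        · subst hbu; exact Or.inl ⟨a, hab.symm, hav, hga⟩
        · subst hbv; exact Or.inr (Or.inl ⟨a, hab.symm, hau, hga⟩)
      · exact absurd h hau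
      · exact absurd h hav
    have hsplit : (1 : ℝ) ≤ (∑ g : V → Bool,
        if (∀ a b, G.Adj a b → (g a = true ∨ a = u ∨ a = v) →
            (g b = true ∨ b = u ∨ b = v) → (a = u ∧ b = v) ∨ (a = v ∧ b = u))
          then μ g else 0) + (∑ g : V → Bool,
        if ((∃ w, G.Adj u w ∧ w ≠ v ∧ g w = true) ∨
            (∃ w, G.Adj v w ∧ w ≠ u ∧ g w = true) ∨
            (∃ a b, G.Adj a b ∧ g a = true ∧ g b = true ∧
              a ≠ u ∧ a ≠ v ∧ b ≠ u ∧ b ≠ v))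
          then μ g else 0) := by
      rw [← Finset.sum_add_distrib]
      calc (1:ℝ) = ∑ g : V → Bool, μ g := (key_total p).symm
      _ ≤ _ := by
        refine Finset.sum_le_sum fun g _ => ?_
        by_cases hl : (∀ a b, G.Adj a b → (g a = true ∨ a = u ∨ a = v) →
            (g b = true ∨ b = u ∨ b = v) → (a = u ∧ b = v) ∨ (a = v ∧ b = u))
        · rw [if_pos hl]
          have : (0:ℝ) ≤ if ((∃ w, G.Adj u w ∧ w ≠ v ∧ g w = true) ∨
              (∃ w, G.Adj v w ∧ w ≠ u ∧ g w = true) ∨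
              (∃ a b, G.Adj a b ∧ g a = true ∧ g b = true ∧
                a ≠ u ∧ a ≠ v ∧ b ≠ u ∧ b ≠ v)) then μ g else 0 := by
            split_ifs
            · exact hμ0 g
            · exact le_rfl
          linarith
        · rw [if_neg hl, if_pos (hlogic g hl)]
          linarith [hμ0 g]
    linarith
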